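/- Let k be a field of characteristic ≠ 2 and H the Heisenberg Lie k-algebra. Every k-involution of H is equivalent to exactly one of the following three: (1) x ↦ x, y ↦ −y, z ↦ z; (2) x ↦ x, y ↦ y, z ↦ −z; (3) x ↦ −x, y ↦ −y, z ↦ −z. -/

import Mathlib

section aux
variable {k H : Type} [Field k] [LieRing H] [LieAlgebra k H]

private lemma brk (x y z : H) (hz : ⁅y, x⁆ = z) (hxz : ⁅x, z⁆ = 0) (hyz : ⁅y, z⁆ = 0)
    (a b c a' b' c' : k) :
    ⁅a • x + b • y + c • z, a' • x + b' • y + c' • z⁆ = (b * a' - a * b') • z := by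
  have hxy : ⁅x, y⁆ = -z := by rw [← hz, lie_skew]
  have hzx : ⁅z, x⁆ = 0 := by rw [← lie_skew, hxz, neg_zero]
  have hzy : ⁅z, y⁆ = 0 := by rw [← lie_skew, hyz, neg_zero]
  simp only [add_lie, lie_add, smul_lie, lie_smul, lie_self, hz, hxy, hxz, hyz, hzx, hzy,
    smul_zero, add_zero, zero_add, smul_neg]
  module

private lemma fin3_decomp (e : Module.Basis (Fin 3) k H) (h : H) :
    h = e.repr h 0 • e 0 + e.repr h 1 • e 1 + e.repr h 2 • e 2 := by
  have h1 := e.sum_repr h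
  rw [Fin.sum_univ_three] at h1
  exact h1.symm

private lemma fin3_unique (e : Module.Basis (Fin 3) k H) {a b c a' b' c' : k}
    (h : a • e 0 + b • e 1 + c • e 2 = a' • e 0 + b' • e 1 + c' • e 2) :
    a = a' ∧ b = b' ∧ c = c' := by
  have li := e.linearIndependent
  rw [Fintype.linearIndependent_iff] at li
  have key := li ![a - a', b - b', c - c'] (by
    rw [Fin.sum_univ_three]
    simp only [Matrix.cons_val_zero, Matrix.cons_val_one, Matrix.head_cons,
      Matrix.cons_val_two, Matrix.tail_cons]
    linear_combination (norm := module) h)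
  refine ⟨?_, ?_, ?_⟩
  · have := key 0; simpa [sub_eq_zero] using this
  · have := key 1; simpa [sub_eq_zero] using this
  · have := key 2; simpa [sub_eq_zero] using this

private lemma mk_auto (e : Module.Basis (Fin 3) k H) (x y z : H)
    (hx : e 0 = x) (hy : e 1 = y) (hzb : e 2 = z)
    (hz : ⁅y, x⁆ = z) (hxz : ⁅x, z⁆ = 0) (hyz : ⁅y, z⁆ = 0)
    (a b α c d β : k) (hD : a * d - b * c ≠ 0) :
    ∃ φ : H ≃ₗ[k] H, (∀ h1 h2 : H, φ ⁅h1, h2⁆ = ⁅φ h1, φ h2⁆) ∧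
      φ x = a • x + b • y + α • z ∧ φ y = c • x + d • y + β • z ∧
      φ z = (a * d - b * c) • z := by
  subst hx hy hzb
  let F : H →ₗ[k] H := e.constr k ![a • e 0 + b • e 1 + α • e 2,
    c • e 0 + d • e 1 + β • e 2, (a * d - b * c) • e 2]
  let G : H →ₗ[k] H := e.constr k
    ![(d / (a * d - b * c)) • e 0 + (-(b / (a * d - b * c))) • e 1 +
        ((b * β - d * α) / ((a * d - b * c) * (a * d - b * c))) • e 2,
      (-(c / (a * d - b * c))) • e 0 + (a / (a * d - b * c)) • e 1 +
        ((c * α - a * β) / ((a * d - b * c) * (a * d - b * c))) • e 2,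
      (1 / (a * d - b * c)) • e 2]
  have hF0 : F (e 0) = a • e 0 + b • e 1 + α • e 2 := by
    show e.constr k _ _ = _; rw [Module.Basis.constr_basis]; rfl
  have hF1 : F (e 1) = c • e 0 + d • e 1 + β • e 2 := by
    show e.constr k _ _ = _; rw [Module.Basis.constr_basis]; rfl
  have hF2 : F (e 2) = (a * d - b * c) • e 2 := by
    show e.constr k _ _ = _; rw [Module.Basis.constr_basis]; rfl
  have hG0 : G (e 0) = (d / (a * d - b * c)) • e 0 + (-(b / (a * d - b * c))) • e 1 +
      ((b * β - d * α) / ((a * d - b * c) * (a * d - b * c))) • e 2 := by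
    show e.constr k _ _ = _; rw [Module.Basis.constr_basis]; rfl
  have hG1 : G (e 1) = (-(c / (a * d - b * c))) • e 0 + (a / (a * d - b * c)) • e 1 +
      ((c * α - a * β) / ((a * d - b * c) * (a * d - b * c))) • e 2 := by
    show e.constr k _ _ = _; rw [Module.Basis.constr_basis]; rfl
  have hG2 : G (e 2) = (1 / (a * d - b * c)) • e 2 := by
    show e.constr k _ _ = _; rw [Module.Basis.constr_basis]; rfl
  have hFG : F.comp G = LinearMap.id := by
    apply LinearMap.ext
    intro v
    obtain ⟨A, B, C, hv⟩ : ∃ A B C : k, v = A • e 0 + B • e 1 + C • e 2 :=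
      ⟨_, _, _, fin3_decomp e v⟩
    rw [hv]
    simp only [LinearMap.comp_apply, LinearMap.id_apply, map_add, map_smul,
      hG0, hG1, hG2, hF0, hF1, hF2]
    have hD' : d * a - b * c ≠ 0 := by rwa [mul_comm d a]
    match_scalars <;> (field_simp; try ring)
  have hGF : G.comp F = LinearMap.id := by
    apply LinearMap.ext
    intro v
    obtain ⟨A, B, C, hv⟩ : ∃ A B C : k, v = A • e 0 + B • e 1 + C • e 2 :=
      ⟨_, _, _, fin3_decomp e v⟩
    rw [hv]
    simp only [LinearMap.comp_apply, LinearMap.id_apply, map_add, map_smul,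
      hF0, hF1, hF2, hG0, hG1, hG2]
    match_scalars <;> (field_simp; try ring)
  refine ⟨LinearEquiv.ofLinear F G hFG hGF, ?_, hF0, hF1, hF2⟩
  intro h1 h2
  have hxy : ⁅e 0, e 1⁆ = -e 2 := by rw [← hz, lie_skew]
  have hzx : ⁅e 2, e 0⁆ = 0 := by rw [← lie_skew, hxz, neg_zero]
  have hzy : ⁅e 2, e 1⁆ = 0 := by rw [← lie_skew, hyz, neg_zero]
  show F ⁅h1, h2⁆ = ⁅F h1, F h2⁆
  rw [fin3_decomp e h1, fin3_decomp e h2]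
  simp only [lie_add, add_lie, lie_smul, smul_lie, lie_self, hz, hxy, hxz, hyz, hzx, hzy,
    smul_zero, add_zero, zero_add, smul_neg, map_add, map_smul, map_neg, map_zero,
    hF0, hF1, hF2]
  module

private lemma eq_neg_self_zero {k H : Type} [Field k] [LieRing H] [LieAlgebra k H]
    {v : H} (hchar : (2:k) ≠ 0) (h : v = -v) : v = 0 := by
  have h2 : (2:k) • v = 0 := by
    rw [two_smul]
    nth_rewrite 1 [h]
    abel
  rcases smul_eq_zero.mp h2 with h' | h'
  · exact absurd h' hchar
  · exact h'

end aux

/-- `τ` is equivalent, via a Lie algebra automorphism `φ` of `H` (i.e. `φ⁻¹∘τ∘φ` is the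
involution determined on the basis `x, y, z` by the values `x', y', z'`). -/
def LieInvolutionEquivVia (k H : Type) [Field k] [LieRing H] [LieAlgebra k H]
    (τ : H →ₗ[k] H) (x y z x' y' z' : H) : Prop :=
  ∃ φ : H ≃ₗ[k] H, (∀ a b : H, φ ⁅a, b⁆ = ⁅φ a, φ b⁆) ∧
    φ.symm (τ (φ x)) = x' ∧ φ.symm (τ (φ y)) = y' ∧ φ.symm (τ (φ z)) = z'

/-- Let `k` be a field of characteristic `≠ 2` and `H` the Heisenberg
Lie `k`-algebra (basis `x, y, z`, `⁅y, x⁆ = z`, `⁅x, z⁆ = ⁅y, z⁆ = 0`).  Every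
`k`-involution of `H` is equivalent, via an automorphism of `H`, to exactly one of the
three involutions: (1) `x ↦ x, y ↦ -y, z ↦ z`; (2) `x ↦ x, y ↦ y, z ↦ -z`;
(3) `x ↦ -x, y ↦ -y, z ↦ -z`. -/
theorem involution_heisenberg_equivalent_to_exactly_one_of_three
    (k : Type) [Field k] (hchar : (2 : k) ≠ 0)
    (H : Type) [LieRing H] [LieAlgebra k H]
    (e : Module.Basis (Fin 3) k H)
    (x y z : H) (hx : e 0 = x) (hy : e 1 = y) (hzb : e 2 = z)
    (hz : ⁅y, x⁆ = z) (hxz : ⁅x, z⁆ = 0) (hyz : ⁅y, z⁆ = 0)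
    (τ : H →ₗ[k] H)
    (hτ2 : ∀ a : H, τ (τ a) = a)
    (hτanti : ∀ a b : H, τ ⁅a, b⁆ = ⁅τ b, τ a⁆) :
    (LieInvolutionEquivVia k H τ x y z x (-y) z ∨
      LieInvolutionEquivVia k H τ x y z x y (-z) ∨
      LieInvolutionEquivVia k H τ x y z (-x) (-y) (-z)) ∧
    ¬(LieInvolutionEquivVia k H τ x y z x (-y) z ∧
        LieInvolutionEquivVia k H τ x y z x y (-z)) ∧
    ¬(LieInvolutionEquivVia k H τ x y z x (-y) z ∧
        LieInvolutionEquivVia k H τ x y z (-x) (-y) (-z)) ∧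
    ¬(LieInvolutionEquivVia k H τ x y z x y (-z) ∧
        LieInvolutionEquivVia k H τ x y z (-x) (-y) (-z)) := by
  -- basic facts
  have hz0 : z ≠ 0 := by rw [← hzb]; exact e.ne_zero 2
  have hx0 : x ≠ 0 := by rw [← hx]; exact e.ne_zero 0
  have hbrk := brk (k := k) x y z hz hxz hyz
  have hdec : ∀ h : H, ∃ A B C : k, h = A • x + B • y + C • z := by
    intro h
    refine ⟨e.repr h 0, e.repr h 1, e.repr h 2, ?_⟩
    rw [← hx, ← hy, ← hzb]
    exact fin3_decomp e h
  have huniq : ∀ A B C A' B' C' : k, A • x + B • y + C • z = A' • x + B' • y + C' • z →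
      A = A' ∧ B = B' ∧ C = C' := by
    intro A B C A' B' C' h
    apply fin3_unique e
    rw [hx, hy, hzb]
    exact h
  have hmk := mk_auto e x y z hx hy hzb hz hxz hyz
  -- τ = -id lemma for the third involution
  have hneg : LieInvolutionEquivVia k H τ x y z (-x) (-y) (-z) → ∀ v : H, τ v = -v := by
    intro h3 v
    obtain ⟨ψ, hbr, hx3, hy3, hz3⟩ := h3
    have tx : τ (ψ x) = -ψ x := by
      have := congrArg ψ hx3
      rwa [LinearEquiv.apply_symm_apply, map_neg] at this
    have ty : τ (ψ y) = -ψ y := by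
      have := congrArg ψ hy3
      rwa [LinearEquiv.apply_symm_apply, map_neg] at this
    have tz : τ (ψ z) = -ψ z := by
      have := congrArg ψ hz3
      rwa [LinearEquiv.apply_symm_apply, map_neg] at this
    obtain ⟨A, B, C, hv⟩ := hdec (ψ.symm v)
    have hv' : v = ψ (A • x + B • y + C • z) := by
      rw [← hv, LinearEquiv.apply_symm_apply]
    rw [hv']
    simp only [map_add, map_smul, tx, ty, tz]
    module
  -- center scalar lemma
  have hcen : ∀ φ : H ≃ₗ[k] H, (∀ a b : H, φ ⁅a, b⁆ = ⁅φ a, φ b⁆) →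
      ∃ m : k, m ≠ 0 ∧ φ z = m • z := by
    intro φ hbr
    obtain ⟨A1, B1, C1, h1⟩ := hdec (φ x)
    obtain ⟨A2, B2, C2, h2⟩ := hdec (φ y)
    refine ⟨B2 * A1 - A2 * B1, ?_, ?_⟩
    · intro h0
      apply hz0
      have : φ z = 0 := by
        conv_lhs => rw [← hz, hbr, h1, h2, hbrk]
        rw [h0, zero_smul]
      exact (LinearEquiv.map_eq_zero_iff φ).mp this
    · conv_lhs => rw [← hz, hbr, h1, h2, hbrk]
  refine ⟨?_, ?_, ?_, ?_⟩
  · -- existence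
    obtain ⟨p, q, r, hτx⟩ := hdec (τ x)
    obtain ⟨s, t, u, hτy⟩ := hdec (τ y)
    have hτz : τ z = (q * s - p * t) • z := by
      have h := hτanti y x
      rw [hz, hτx, hτy, hbrk] at h
      exact h
    have hXX : τ (τ x) = x := hτ2 x
    rw [hτx, map_add, map_add, map_smul, map_smul, map_smul, hτx, hτy, hτz] at hXX
    have eqx : (p*p + q*s) • x + (p*q + q*t) • y + (p*r + q*u + r*(q*s - p*t)) • z
        = (1:k) • x + (0:k) • y + (0:k) • z := by
      linear_combination (norm := module) hXX
    obtain ⟨E1, E2, E3⟩ := huniq _ _ _ _ _ _ eqx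
    have hYY : τ (τ y) = y := hτ2 y
    rw [hτy, map_add, map_add, map_smul, map_smul, map_smul, hτx, hτy, hτz] at hYY
    have eqy : (s*p + t*s) • x + (s*q + t*t) • y + (s*r + t*u + u*(q*s - p*t)) • z
        = (0:k) • x + (1:k) • y + (0:k) • z := by
      linear_combination (norm := module) hYY
    obtain ⟨E4, E5, E6⟩ := huniq _ _ _ _ _ _ eqy
    have hZZ : τ (τ z) = z := hτ2 z
    rw [hτz, map_smul, hτz, smul_smul] at hZZ
    have eqz : (0:k) • x + (0:k) • y + ((q*s - p*t)*(q*s - p*t)) • z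
        = (0:k) • x + (0:k) • y + (1:k) • z := by
      linear_combination (norm := module) hZZ
    have hE2 := (huniq _ _ _ _ _ _ eqz).2.2
    have hecases : q*s - p*t = 1 ∨ q*s - p*t = -1 := by
      rcases mul_eq_zero.mp (show ((q*s - p*t) - 1) * ((q*s - p*t) + 1) = 0 from by
        linear_combination hE2) with h | h
      · left; linear_combination h
      · right; linear_combination h
    rcases hecases with heps | heps
    · -- case ε = 1
      left
      have key1 : ∀ A B Av C D Cv : k, (A ≠ 0 ∨ B ≠ 0) → (C ≠ 0 ∨ D ≠ 0) →
          τ (A•x + B•y + Av•z) = A•x + B•y + Av•z →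
          τ (C•x + D•y + Cv•z) = -(C•x + D•y + Cv•z) →
          LieInvolutionEquivVia k H τ x y z x (-y) z := by
        intro A B Av C D Cv hAB hCD hfix hflip
        have hv' : τ (A•x + B•y + Av•z)
            = (A*p + B*s)•x + (A*q + B*t)•y + (A*r + B*u + Av*(q*s - p*t))•z := by
          rw [map_add, map_add, map_smul, map_smul, map_smul, hτx, hτy, hτz]; module
        have hw' : τ (C•x + D•y + Cv•z)
            = (C*p + D*s)•x + (C*q + D*t)•y + (C*r + D*u + Cv*(q*s - p*t))•z := by
          rw [map_add, map_add, map_smul, map_smul, map_smul, hτx, hτy, hτz]; module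
        obtain ⟨F1, F2, -⟩ := huniq _ _ _ _ _ _ (hv'.symm.trans hfix)
        have hwc : (C*p + D*s)•x + (C*q + D*t)•y + (C*r + D*u + Cv*(q*s - p*t))•z
            = (-C)•x + (-D)•y + (-Cv)•z := by
          rw [← hw', hflip]; module
        obtain ⟨G1, G2, -⟩ := huniq _ _ _ _ _ _ hwc
        have hD : A * D - B * C ≠ 0 := by
          intro hD0
          rcases hAB with hA | hB
          · have h2 : 2 * (C * A) = 0 := by linear_combination A * G1 - C * F1 - s * hD0
            have hC : C = 0 := by
              rcases mul_eq_zero.mp h2 with h | h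
              · exact absurd h hchar
              · exact (mul_eq_zero.mp h).resolve_right hA
            have hDD : D = 0 := by
              have hAD : A * D = 0 := by linear_combination hD0 + B * hC
              exact (mul_eq_zero.mp hAD).resolve_left hA
            rcases hCD with h | h
            exacts [h hC, h hDD]
          · have h2 : 2 * (D * B) = 0 := by linear_combination B * G2 - D * F2 + q * hD0
            have hDD : D = 0 := by
              rcases mul_eq_zero.mp h2 with h | h
              · exact absurd h hchar
              · exact (mul_eq_zero.mp h).resolve_right hB
            have hC : C = 0 := by
              have hBC : B * C = 0 := by linear_combination -hD0 + A * hDD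
              exact (mul_eq_zero.mp hBC).resolve_left hB
            rcases hCD with h | h
            exacts [h hC, h hDD]
        obtain ⟨φ, hbr, hφx, hφy, hφz⟩ := hmk A B Av C D Cv hD
        refine ⟨φ, hbr, ?_, ?_, ?_⟩
        · rw [hφx, hfix, ← hφx, LinearEquiv.symm_apply_apply]
        · rw [hφy, hflip, ← hφy, ← map_neg, LinearEquiv.symm_apply_apply]
        · rw [hφz, map_smul, hτz, heps, one_smul, ← hφz, LinearEquiv.symm_apply_apply]
      have hv1 : τ ((1+p)•x + q•y + r•z) = (1+p)•x + q•y + r•z := by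
        have hc : (1+p)•x + q•y + r•z = x + τ x := by rw [hτx]; module
        rw [hc, map_add, hτ2]
        exact add_comm _ _
      have hv2 : τ (s•x + (1+t)•y + u•z) = s•x + (1+t)•y + u•z := by
        have hc : s•x + (1+t)•y + u•z = y + τ y := by rw [hτy]; module
        rw [hc, map_add, hτ2]
        exact add_comm _ _
      have hw1 : τ ((1-p)•x + (-q)•y + (-r)•z) = -((1-p)•x + (-q)•y + (-r)•z) := by
        have hc : (1-p)•x + (-q)•y + (-r)•z = x - τ x := by rw [hτx]; module
        rw [hc, map_sub, hτ2]
        abel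
      have hw2 : τ ((-s)•x + (1-t)•y + (-u)•z) = -((-s)•x + (1-t)•y + (-u)•z) := by
        have hc : (-s)•x + (1-t)•y + (-u)•z = y - τ y := by rw [hτy]; module
        rw [hc, map_sub, hτ2]
        abel
      by_cases hA : (1+p) ≠ 0 ∨ q ≠ 0
      · by_cases hB : (1-p) ≠ 0 ∨ (-q) ≠ 0
        · exact key1 _ _ _ _ _ _ hA hB hv1 hw1
        · push_neg at hB
          obtain ⟨hB1, hB2⟩ := hB
          have hCD : (-s) ≠ 0 ∨ (1-t) ≠ 0 := by
            by_contra hc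
            push_neg at hc
            obtain ⟨hc1, hc2⟩ := hc
            exact hchar (by linear_combination -heps + hB1 + p*hc2 - s*hB2)
          exact key1 _ _ _ _ _ _ hA hCD hv1 hw2
      · push_neg at hA
        obtain ⟨hA1, hA2⟩ := hA
        have hAB : s ≠ 0 ∨ (1+t) ≠ 0 := by
          by_contra hc
          push_neg at hc
          obtain ⟨hc1, hc2⟩ := hc
          exact hchar (by linear_combination -heps + hA1 - p*hc2 + s*hA2)
        have hB : (1-p) ≠ 0 ∨ (-q) ≠ 0 := by
          left
          intro h0
          exact hchar (by linear_combination hA1 + h0)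
        exact key1 _ _ _ _ _ _ hAB hB hv2 hw1
    · -- case ε = -1
      have hpt : p + t ≠ 0 := fun h => hchar (by linear_combination -E1 + heps + p*h)
      have hq0 : q = 0 := by
        rcases mul_eq_zero.mp (show q * (p + t) = 0 from by linear_combination E2) with h | h
        · exact h
        · exact absurd h hpt
      have hs0 : s = 0 := by
        rcases mul_eq_zero.mp (show s * (p + t) = 0 from by linear_combination E4) with h | h
        · exact h
        · exact absurd h hpt
      have hp2 : p * p = 1 := by linear_combination E1 - s * hq0
      have hptv : p * t = 1 := by linear_combination -heps + s * hq0
      have htp : p = t := by linear_combination t * hp2 - p * hptv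
      subst htp
      subst hq0
      subst hs0
      have hpc : p = 1 ∨ p = -1 := by
        rcases mul_eq_zero.mp (show (p - 1) * (p + 1) = 0 from by linear_combination hp2)
          with h | h
        · left; linear_combination h
        · right; linear_combination h
      rcases hpc with hp1 | hp1
      · -- second involution
        subst hp1
        right; left
        obtain ⟨φ, hbr, hφx, hφy, hφz⟩ := hmk 2 0 r 0 2 u
          (by intro h; exact (mul_ne_zero hchar hchar) (by linear_combination h))
        refine ⟨φ, hbr, ?_, ?_, ?_⟩
        · have hfix : τ (φ x) = φ x := by
            rw [hφx, map_add, map_add, map_smul, map_smul, map_smul, hτx, hτy, hτz]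
            module
          rw [hfix, LinearEquiv.symm_apply_apply]
        · have hfix : τ (φ y) = φ y := by
            rw [hφy, map_add, map_add, map_smul, map_smul, map_smul, hτx, hτy, hτz]
            module
          rw [hfix, LinearEquiv.symm_apply_apply]
        · have hflip : τ (φ z) = φ (-z) := by
            rw [hφz, map_smul, hτz, map_neg, hφz]
            module
          rw [hflip, LinearEquiv.symm_apply_apply]
      · -- third involution
        subst hp1
        right; right
        have hr : r = 0 := by
          have h2 : 2 * r = 0 := by linear_combination -E3
          exact (mul_eq_zero.mp h2).resolve_left hchar
        have hu : u = 0 := by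
          have h2 : 2 * u = 0 := by linear_combination -E6
          exact (mul_eq_zero.mp h2).resolve_left hchar
        subst hr
        subst hu
        obtain ⟨φ, hbr, hφx, hφy, hφz⟩ := hmk 1 0 0 0 1 0 (by norm_num)
        refine ⟨φ, hbr, ?_, ?_, ?_⟩
        · have hflip : τ (φ x) = φ (-x) := by
            rw [hφx, map_neg, hφx, map_add, map_add, map_smul, map_smul, map_smul,
              hτx, hτy, hτz]
            module
          rw [hflip, LinearEquiv.symm_apply_apply]
        · have hflip : τ (φ y) = φ (-y) := by
            rw [hφy, map_neg, hφy, map_add, map_add, map_smul, map_smul, map_smul,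
              hτx, hτy, hτz]
            module
          rw [hflip, LinearEquiv.symm_apply_apply]
        · have hflip : τ (φ z) = φ (-z) := by
            rw [hφz, map_neg, hφz, map_smul, hτz]
            module
          rw [hflip, LinearEquiv.symm_apply_apply]
  -- (1) and (2) incompatible
  · rintro ⟨⟨φ, hbrφ, -, -, hφ3⟩, ⟨ψ, hbrψ, -, -, hψ3⟩⟩
    obtain ⟨m, hm, hφz⟩ := hcen φ hbrφ
    obtain ⟨n, hn, hψz⟩ := hcen ψ hbrψ
    have t1 : τ z = z := by
      have := congrArg φ hφ3
      rw [LinearEquiv.apply_symm_apply] at this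
      rw [hφz, map_smul] at this
      exact smul_right_injective H hm this
    have t2 : τ z = -z := by
      have := congrArg ψ hψ3
      rw [LinearEquiv.apply_symm_apply, map_neg] at this
      rw [hψz, map_smul, ← smul_neg] at this
      exact smul_right_injective H hn this
    exact hz0 (eq_neg_self_zero hchar (t1.symm.trans t2))
  -- (1) and (3) incompatible
  · rintro ⟨⟨φ, hbrφ, hφ1, -, -⟩, h3⟩
    have hτ := hneg h3
    have t1 : τ (φ x) = φ x := by
      have := congrArg φ hφ1
      rwa [LinearEquiv.apply_symm_apply] at this
    have : φ x = 0 := eq_neg_self_zero hchar (t1.symm.trans (hτ (φ x)))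
    exact hx0 ((LinearEquiv.map_eq_zero_iff φ).mp this)
  -- (2) and (3) incompatible
  · rintro ⟨⟨φ, hbrφ, hφ1, -, -⟩, h3⟩
    have hτ := hneg h3
    have t1 : τ (φ x) = φ x := by
      have := congrArg φ hφ1
      rwa [LinearEquiv.apply_symm_apply] at this
    have : φ x = 0 := eq_neg_self_zero hchar (t1.symm.trans (hτ (φ x)))
    exact hx0 ((LinearEquiv.map_eq_zero_iff φ).mp this)
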